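/- Let M > 0 and let f = h + conj∘g ∈ 𝓑_{H_n^0}(M). Then for every z ∈ 𝔻ⁿ and every k = 1,…,n, |∂h/∂z_k(z)| + |∂g/∂z_k(z)| ≤ 1 + n·M·‖z‖_∞ and |∂h/∂z_k(z)| − |∂g/∂z_k(z)| ≥ 1 − n·M·‖z‖_∞. (Derivative estimates (2.18) from the proof of Theorem 2.8.) -/

import Mathlib

open Complex Finset Metric MeasureTheory

set_option maxHeartbeats 1000000
set_option synthInstance.maxHeartbeats 400000

lemma exists_unit_mul (A : ℂ) : ∃ α : ℂ, ‖α‖ = 1 ∧ α * A = ‖A‖ := by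
  rcases eq_or_ne A 0 with rfl | hA
  · exact ⟨1, by simp⟩
  · refine ⟨(‖A‖ : ℂ) / A, ?_, ?_⟩
    · rw [norm_div]
      simp [hA]
    · field_simp


lemma cauchy_bound {n : ℕ} {f : (Fin n → ℂ) → ℂ} {x : Fin n → ℂ} {ρ C : ℝ} (hρ : 0 < ρ)
    (hd : ∀ y ∈ Metric.ball x ρ, DifferentiableAt ℂ f y)
    (hC : ∀ y ∈ Metric.ball x ρ, ‖f y‖ ≤ C) :
    ‖fderiv ℂ f x‖ ≤ (2 * C + 1) / ρ := by
  have hx : x ∈ ball x ρ := mem_ball_self hρ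
  have hC0 : 0 ≤ C := (norm_nonneg _).trans (hC x hx)
  refine ContinuousLinearMap.opNorm_le_bound _ (by positivity) fun v => ?_
  rcases eq_or_ne v 0 with rfl | hv
  · simp
  have hnv : (0:ℝ) < ‖v‖ := norm_pos_iff.2 hv
  set u : Fin n → ℂ := ((‖v‖ : ℂ))⁻¹ • v with hu
  have hnu : ‖u‖ = 1 := by
    rw [hu, norm_smul, norm_inv, Complex.norm_real, Real.norm_eq_abs, abs_of_pos hnv,
      inv_mul_cancel₀ hnv.ne']
  have hline : ∀ t : ℂ, HasDerivAt (fun s : ℂ => x + s • u) u t := by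
    intro t
    simpa using ((hasDerivAt_id t).smul_const u).const_add x
  have hmem : ∀ t : ℂ, t ∈ ball (0:ℂ) ρ → x + t • u ∈ ball x ρ := by
    intro t ht
    rw [mem_ball, dist_eq_norm, add_sub_cancel_left, norm_smul, hnu, mul_one]
    simpa [mem_ball, dist_eq_norm] using ht
  have hφd : ∀ t ∈ ball (0:ℂ) ρ,
      HasDerivAt (fun s : ℂ => f (x + s • u)) (fderiv ℂ f (x + t • u) u) t :=
    fun t ht => (hd _ (hmem t ht)).hasFDerivAt.comp_hasDerivAt t (hline t)
  have hφdiff : DifferentiableOn ℂ (fun s : ℂ => f (x + s • u)) (ball 0 ρ) :=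
    fun t ht => ((hφd t ht).differentiableAt).differentiableWithinAt
  have hmaps : Set.MapsTo (fun s : ℂ => f (x + s • u)) (ball 0 ρ)
      (ball (f (x + (0:ℂ) • u)) (2 * C + 1)) := by
    intro t ht
    have h1 : ‖f (x + t • u)‖ ≤ C := hC _ (hmem t ht)
    have h2 : ‖f (x + (0:ℂ) • u)‖ ≤ C := hC _ (hmem 0 (mem_ball_self hρ))
    rw [mem_ball, dist_eq_norm]
    calc ‖f (x + t • u) - f (x + (0:ℂ) • u)‖ ≤ ‖f (x + t • u)‖ + ‖f (x + (0:ℂ) • u)‖ :=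
          norm_sub_le _ _
      _ < 2 * C + 1 := by linarith
  have hsch := Complex.norm_deriv_le_div_of_mapsTo_ball hφdiff (hmaps.mono_right ball_subset_closedBall) hρ
  have hder : deriv (fun s : ℂ => f (x + s • u)) 0 = fderiv ℂ f x u := by
    have := (hφd 0 (mem_ball_self hρ)).deriv
    simpa using this
  have hLu : ‖fderiv ℂ f x u‖ ≤ (2 * C + 1) / ρ := by rw [← hder]; exact hsch
  have hveq : v = (‖v‖ : ℂ) • u := by
    rw [hu, smul_smul, mul_inv_cancel₀ (by exact_mod_cast hnv.ne'), one_smul]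
  calc ‖fderiv ℂ f x v‖ = ‖fderiv ℂ f x ((‖v‖ : ℂ) • u)‖ := by rw [← hveq]
    _ = ‖v‖ * ‖fderiv ℂ f x u‖ := by
        rw [_root_.map_smul, norm_smul, Complex.norm_real, Real.norm_eq_abs, abs_of_pos hnv]
    _ ≤ (2 * C + 1) / ρ * ‖v‖ := by rw [mul_comm]; gcongr

/-- One-variable Schwarz-type step. -/
lemma schwarz_step {W : ℂ → ℂ} {M : ℝ}
    (hW : ∀ ζ ∈ Metric.ball (0:ℂ) 1, DifferentiableAt ℂ W ζ)
    (hb : ∀ ζ ∈ Metric.ball (0:ℂ) 1, ‖ζ * W ζ‖ ≤ M)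
    {ζ₀ : ℂ} (hζ₀ : ζ₀ ∈ Metric.ball (0:ℂ) 1) : ‖W ζ₀‖ ≤ M := by
  set Φ : ℂ → ℂ := fun ζ => ζ * W ζ with hΦ
  have hΦ0 : Φ 0 = 0 := by simp [hΦ]
  have hd : DifferentiableOn ℂ Φ (ball 0 1) :=
    fun ζ hζ => (differentiableAt_id.mul (hW ζ hζ)).differentiableWithinAt
  have hM0 : 0 ≤ M := le_trans (norm_nonneg _) (hb 0 (mem_ball_self one_pos))
  have hdsl : ∀ ζ ∈ ball (0:ℂ) 1, dslope Φ 0 ζ = W ζ := by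
    intro ζ hζ
    rcases eq_or_ne ζ 0 with rfl | hne
    · rw [dslope_same]
      have : HasDerivAt Φ (1 * W 0 + 0 * deriv W 0) 0 :=
        (hasDerivAt_id 0).mul (hW 0 (mem_ball_self one_pos)).hasDerivAt
      simpa using this.deriv
    · rw [dslope_of_ne _ hne, slope_def_field, hΦ]
      field_simp
      ring
  have key : ∀ ε > (0:ℝ), ‖W ζ₀‖ ≤ M + ε := by
    intro ε hε
    have hmaps : Set.MapsTo Φ (ball 0 1) (ball (Φ 0) (M + ε)) := by
      intro ζ hζ
      rw [hΦ0, mem_ball, dist_zero_right]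
      exact lt_of_le_of_lt (hb ζ hζ) (by linarith)
    have := Complex.norm_dslope_le_div_of_mapsTo_ball hd (hmaps.mono_right ball_subset_closedBall) hζ₀
    rw [hdsl ζ₀ hζ₀, div_one] at this
    exact this
  exact le_of_forall_pos_le_add key


/-- Key regularity: a partial derivative of a holomorphic function on an open subset of `ℂⁿ`
is again holomorphic there. -/
lemma pder_diff {n : ℕ} {f : (Fin n → ℂ) → ℂ} {U : Set (Fin n → ℂ)} (hU : IsOpen U)
    (hf : ∀ z ∈ U, DifferentiableAt ℂ f z) (j : Fin n) :
    ∀ w₀ ∈ U, DifferentiableAt ℂ (fun w => fderiv ℂ f w (Pi.single j 1)) w₀ := by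
  intro w₀ hw₀
  obtain ⟨ε, hε, hballU⟩ := Metric.isOpen_iff.1 hU w₀ hw₀
  set ρ : ℝ := ε / 4 with hρdef
  have hρ : 0 < ρ := by positivity
  have hsub : Metric.closedBall w₀ (3 * ρ) ⊆ U := by
    intro y hy
    exact hballU (lt_of_le_of_lt (mem_closedBall.1 hy) (by rw [hρdef]; linarith))
  have hcont : ContinuousOn f (Metric.closedBall w₀ (3 * ρ)) :=
    fun y hy => (hf y (hsub hy)).continuousAt.continuousWithinAt
  obtain ⟨C, hC⟩ := (isCompact_closedBall w₀ (3 * ρ)).exists_bound_of_continuousOn hcont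
  have hC0 : 0 ≤ C := (norm_nonneg _).trans (hC w₀ (mem_closedBall_self (by positivity)))
  -- fderiv bound on the 2ρ-ball
  have hDb : ∀ y ∈ Metric.closedBall w₀ (2 * ρ), ‖fderiv ℂ f y‖ ≤ (2 * C + 1) / ρ := by
    intro y hy
    have hsub2 : Metric.ball y ρ ⊆ Metric.closedBall w₀ (3 * ρ) := by
      intro p hp
      rw [mem_closedBall]
      calc dist p w₀ ≤ dist p y + dist y w₀ := dist_triangle _ _ _
        _ ≤ ρ + 2 * ρ := add_le_add (mem_ball.1 hp).le (mem_closedBall.1 hy)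
        _ = 3 * ρ := by ring
    exact cauchy_bound hρ (fun p hp => hf p (hsub (hsub2 hp))) (fun p hp => hC p (hsub2 hp))
  set e : Fin n → ℂ := Pi.single j 1 with he
  have hne : ‖e‖ ≤ 1 := by rw [he, Pi.norm_single]; simp
  have hcm : ∀ θ : ℝ, ‖circleMap 0 ρ θ‖ = ρ := by
    intro θ
    rw [norm_circleMap_zero, abs_of_pos hρ]
  have hcmne : ∀ θ : ℝ, circleMap 0 ρ θ ≠ 0 := by
    intro θ h
    have := hcm θ
    rw [h, norm_zero] at this
    exact hρ.ne this
  set s : ℝ → ℂ := fun θ => deriv (circleMap 0 ρ) θ *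
    ((1 / (circleMap 0 ρ θ - 0)) ^ 1 * (circleMap 0 ρ θ - 0)⁻¹) with hs
  have hsabs : ∀ θ, ‖s θ‖ = ρ⁻¹ := by
    intro θ
    rw [hs]
    simp only [deriv_circleMap, sub_zero, one_div, pow_one, norm_mul, norm_inv, hcm,
      Complex.norm_I]
    field_simp
  have hscont : Continuous s := by
    have h3 : Continuous fun θ => circleMap 0 ρ θ := continuous_circleMap 0 ρ
    have h5 : Continuous fun θ => deriv (circleMap 0 ρ) θ := by
      simp only [deriv_circleMap]
      exact h3.mul continuous_const
    apply h5.mul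
    apply Continuous.mul
    · simp only [sub_zero, one_div, pow_one]
      exact h3.inv₀ hcmne
    · simp only [sub_zero]
      exact h3.inv₀ hcmne
  set K : (Fin n → ℂ) → ℝ → ℂ := fun x θ => s θ * f (x + circleMap 0 ρ θ • e) with hK
  set K' : (Fin n → ℂ) → ℝ → (Fin n → ℂ) →L[ℂ] ℂ :=
    fun x θ => s θ • fderiv ℂ f (x + circleMap 0 ρ θ • e) with hK'
  have hmempt : ∀ x ∈ ball w₀ ρ, ∀ θ : ℝ, x + circleMap 0 ρ θ • e ∈ closedBall w₀ (2 * ρ) := by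
    intro x hx θ
    rw [mem_closedBall, dist_eq_norm, add_sub_right_comm]
    calc ‖x - w₀ + circleMap 0 ρ θ • e‖ ≤ ‖x - w₀‖ + ‖circleMap 0 ρ θ • e‖ := norm_add_le _ _
      _ ≤ ρ + ρ * 1 := by
          apply add_le_add
          · exact (by rwa [mem_ball, dist_eq_norm] at hx : ‖x - w₀‖ < ρ).le
          · rw [norm_smul, hcm]
            exact mul_le_mul_of_nonneg_left hne hρ.le
      _ = 2 * ρ := by ring
  have hUmem : ∀ x ∈ ball w₀ ρ, ∀ θ : ℝ, x + circleMap 0 ρ θ • e ∈ U := fun x hx θ =>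
    hsub (closedBall_subset_closedBall (by linarith) (hmempt x hx θ))
  have hpath : ∀ x : Fin n → ℂ, Continuous fun θ : ℝ => x + circleMap 0 ρ θ • e :=
    fun x => continuous_const.add ((continuous_circleMap 0 ρ).smul continuous_const)
  have hcontK : ∀ x ∈ ball w₀ ρ, Continuous (K x) := by
    intro x hx
    apply hscont.mul
    exact ContinuousOn.comp_continuous
      (fun y hy => (hf y hy).continuousAt.continuousWithinAt) (hpath x) (hUmem x hx)
  -- differentiation under the integral sign
  have hInt : HasFDerivAt (fun x => ∫ θ in (0:ℝ)..(2 * Real.pi), K x θ)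
      (∫ θ in (0:ℝ)..(2 * Real.pi), K' w₀ θ) w₀ := by
    apply intervalIntegral.hasFDerivAt_integral_of_dominated_of_fderiv_le
      (bound := fun _ : ℝ => ρ⁻¹ * ((2 * C + 1) / ρ)) (s := ball w₀ ρ) (ball_mem_nhds w₀ hρ)
    · filter_upwards [ball_mem_nhds w₀ hρ] with x hx using (hcontK x hx).aestronglyMeasurable
    · exact (hcontK w₀ (mem_ball_self hρ)).intervalIntegrable 0 (2 * Real.pi)
    · have m1 : Measurable fun θ : ℝ => fderiv ℂ f (w₀ + circleMap 0 ρ θ • e) :=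
        (measurable_fderiv ℂ f).comp (hpath w₀).measurable
      exact (hscont.stronglyMeasurable.smul m1.stronglyMeasurable).aestronglyMeasurable
    · refine Filter.Eventually.of_forall fun θ _ => fun x hx => ?_
      show ‖s θ • fderiv ℂ f (x + circleMap 0 ρ θ • e)‖ ≤ _
      rw [norm_smul, hsabs]
      exact mul_le_mul_of_nonneg_left (hDb _ (hmempt x hx θ)) (by positivity)
    · exact intervalIntegrable_const
    · refine Filter.Eventually.of_forall fun θ _ => fun x hx => ?_
      have h2 : HasFDerivAt (fun y : Fin n → ℂ => y + circleMap 0 ρ θ • e)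
          (ContinuousLinearMap.id ℂ _) x := (hasFDerivAt_id x).add_const _
      have h1 : HasFDerivAt f (fderiv ℂ f (x + circleMap 0 ρ θ • e))
          (x + circleMap 0 ρ θ • e) := (hf _ (hUmem x hx θ)).hasFDerivAt
      have h3 := h1.comp x h2
      rw [ContinuousLinearMap.comp_id] at h3
      exact h3.const_mul (s θ)
  -- identification with the partial derivative on the ball
  have heq : ∀ x ∈ ball w₀ ρ, fderiv ℂ f x e =
      (2 * Real.pi * Complex.I : ℂ)⁻¹ • ∫ θ in (0:ℝ)..(2 * Real.pi), K x θ := by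
    intro x hx
    have hxU : x ∈ U := hsub (mem_closedBall.2 ((mem_ball.1 hx).le.trans (by linarith)))
    set φ : ℂ → ℂ := fun ζ => f (x + ζ • e) with hφ
    have hlineζ : ∀ ζ : ℂ, HasDerivAt (fun ζ : ℂ => x + ζ • e) e ζ := by
      intro ζ
      simpa using ((hasDerivAt_id ζ).smul_const e).const_add x
    have hφmem : ∀ ζ : ℂ, ‖ζ‖ ≤ ρ → x + ζ • e ∈ U := by
      intro ζ hζ
      apply hsub
      rw [mem_closedBall, dist_eq_norm, add_sub_right_comm]
      calc ‖x - w₀ + ζ • e‖ ≤ ‖x - w₀‖ + ‖ζ • e‖ := norm_add_le _ _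
        _ ≤ ρ + ρ * 1 := by
            apply add_le_add
            · exact (by rwa [mem_ball, dist_eq_norm] at hx : ‖x - w₀‖ < ρ).le
            · rw [norm_smul]
              exact mul_le_mul (by simpa using hζ) hne (norm_nonneg _) hρ.le
        _ ≤ 3 * ρ := by linarith
    set R : NNReal := ⟨ρ, hρ.le⟩ with hR
    have hRρ : (R : ℝ) = ρ := rfl
    have hφdiff : DifferentiableOn ℂ φ (Metric.closedBall 0 (R : ℝ)) := by
      intro ζ hζ
      have : DifferentiableAt ℂ φ ζ := by
        have hm : x + ζ • e ∈ U := hφmem ζ (by simpa [dist_eq_norm, hRρ] using mem_closedBall.1 hζ)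
        exact ((hf _ hm).hasFDerivAt.comp_hasDerivAt ζ (hlineζ ζ)).differentiableAt
      exact this.differentiableWithinAt
    have hps : HasFPowerSeriesOnBall φ (cauchyPowerSeries φ 0 (R : ℝ)) 0 R :=
      DifferentiableOn.hasFPowerSeriesOnBall hφdiff (NNReal.coe_pos.mp (by exact hρ : (0:ℝ) < (R:ℝ)))
    have hd1 : deriv φ 0 = cauchyPowerSeries φ 0 (R : ℝ) 1 (fun _ => 1) :=
      hps.hasFPowerSeriesAt.deriv
    have hd2 : deriv φ 0 = fderiv ℂ f x e := by
      have h0 : HasFDerivAt f (fderiv ℂ f x) ((fun ζ : ℂ => x + ζ • e) 0) := by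
        simpa using (hf x hxU).hasFDerivAt
      exact (h0.comp_hasDerivAt 0 (hlineζ 0)).deriv
    have hcirc : (∮ z in C(0, (R : ℝ)), ((1 : ℂ) / (z - 0)) ^ 1 • ((z - 0)⁻¹ • φ z)) =
        ∫ θ in (0:ℝ)..(2 * Real.pi), K x θ := by
      rw [circleIntegral]
      apply intervalIntegral.integral_congr
      intro θ _
      simp only [hK, hs, hφ, smul_eq_mul, hRρ]
      ring
    rw [← hd2, hd1, cauchyPowerSeries_apply, hcirc]
  have hdiffF : DifferentiableAt ℂ
      (fun x => (2 * Real.pi * Complex.I : ℂ)⁻¹ • ∫ θ in (0:ℝ)..(2 * Real.pi), K x θ) w₀ :=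
    hInt.differentiableAt.const_smul ((2 * Real.pi * Complex.I : ℂ)⁻¹)
  apply hdiffF.congr_of_eventuallyEq
  exact Filter.eventuallyEq_of_mem (ball_mem_nhds w₀ hρ) fun x hx => heq x hx

noncomputable def pder {n : ℕ} (f : (Fin n → ℂ) → ℂ) (z : Fin n → ℂ) (j : Fin n) : ℂ :=
  fderiv ℂ f z (Pi.single j 1)

noncomputable def pder2 {n : ℕ} (f : (Fin n → ℂ) → ℂ) (z : Fin n → ℂ) (j k : Fin n) : ℂ :=
  fderiv ℂ (fun w => pder f w k) z (Pi.single j 1)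

def polydisk (n : ℕ) : Set (Fin n → ℂ) := {z | ∀ j, ‖z j‖ < 1}

/-- The class `𝓑_n(M)` of normalized holomorphic functions on the unit polydisk. -/
def memB (n : ℕ) (M : ℝ) (f : (Fin n → ℂ) → ℂ) : Prop :=
  (∀ z ∈ polydisk n, DifferentiableAt ℂ f z) ∧ f 0 = 0 ∧
    (∀ j : Fin n, pder f 0 j = 1) ∧
    ∀ z ∈ polydisk n, ∑ l, ∑ j, ∑ k, ‖z l * pder2 f z j k‖ ≤ M

/-- The class `𝓑_{H_n^0}(M)` of normalized pluriharmonic mappings `f = h + conj ∘ g`. -/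
def memBH (n : ℕ) (M : ℝ) (h g : (Fin n → ℂ) → ℂ) : Prop :=
  (∀ z ∈ polydisk n, DifferentiableAt ℂ h z) ∧ (∀ z ∈ polydisk n, DifferentiableAt ℂ g z) ∧
    h 0 = 0 ∧ g 0 = 0 ∧ (∀ j : Fin n, pder h 0 j = 1) ∧ (∀ j : Fin n, pder g 0 j = 0) ∧
    ∀ z ∈ polydisk n, ∑ l, ∑ j, ∑ k,
      (‖z l * pder2 h z j k‖ + ‖z l * pder2 g z j k‖) ≤ M

lemma polydisk_open (n : ℕ) : IsOpen (polydisk n) := by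
  have : polydisk n = ⋂ j, {z : Fin n → ℂ | ‖z j‖ < 1} := by
    ext z; simp [polydisk]
  rw [this]
  exact isOpen_iInter_of_finite fun j =>
    isOpen_lt (continuous_norm.comp (continuous_apply j)) continuous_const


/-- derivative estimates (2.18) from the proof of Theorem 2.8. -/
theorem stmt_17 {n : ℕ} (M : ℝ) (hM : 0 < M) (h g : (Fin n → ℂ) → ℂ)
    (hf : memBH n M h g) :
    ∀ z ∈ polydisk n, ∀ k : Fin n,
      ‖pder h z k‖ + ‖pder g z k‖ ≤ 1 + (n : ℝ) * M * ‖z‖ ∧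
        1 - (n : ℝ) * M * ‖z‖ ≤ ‖pder h z k‖ - ‖pder g z k‖ := by
  obtain ⟨hdh, hdg, h0, g0, hph, hpg, hbd⟩ := hf
  intro z hz k
  have hU := polydisk_open n
  -- regularity
  have S1h : ∀ k' : Fin n, ∀ w ∈ polydisk n, DifferentiableAt ℂ (fun w => pder h w k') w :=
    fun k' => pder_diff hU hdh k'
  have S1g : ∀ k' : Fin n, ∀ w ∈ polydisk n, DifferentiableAt ℂ (fun w => pder g w k') w :=
    fun k' => pder_diff hU hdg k'
  have S2h : ∀ j' k' : Fin n, ∀ w ∈ polydisk n,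
      DifferentiableAt ℂ (fun w => pder2 h w j' k') w :=
    fun j' k' => pder_diff hU (S1h k') j'
  have S2g : ∀ j' k' : Fin n, ∀ w ∈ polydisk n,
      DifferentiableAt ℂ (fun w => pder2 g w j' k') w :=
    fun j' k' => pder_diff hU (S1g k') j'
  -- single-term extraction from the hypothesis
  have hterm : ∀ u ∈ polydisk n, ∀ l j' k' : Fin n,
      ‖u l * pder2 h u j' k'‖ + ‖u l * pder2 g u j' k'‖ ≤ M := by
    intro u hu l j' k'
    have nn : ∀ (l j' k' : Fin n), 0 ≤
        ‖u l * pder2 h u j' k'‖ + ‖u l * pder2 g u j' k'‖ :=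
      fun _ _ _ => add_nonneg (norm_nonneg _) (norm_nonneg _)
    calc ‖u l * pder2 h u j' k'‖ + ‖u l * pder2 g u j' k'‖
        ≤ ∑ k'', (‖u l * pder2 h u j' k''‖ + ‖u l * pder2 g u j' k''‖) :=
          Finset.single_le_sum (fun i _ => nn l j' i) (mem_univ k')
      _ ≤ ∑ j'', ∑ k'', (‖u l * pder2 h u j'' k''‖ +
            ‖u l * pder2 g u j'' k''‖) :=
          Finset.single_le_sum (f := fun j'' => ∑ k'', (‖u l * pder2 h u j'' k''‖ +
            ‖u l * pder2 g u j'' k''‖))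
            (fun i _ => Finset.sum_nonneg fun i' _ => nn l i i') (mem_univ j')
      _ ≤ ∑ l', ∑ j'', ∑ k'', (‖u l' * pder2 h u j'' k''‖ +
            ‖u l' * pder2 g u j'' k''‖) :=
          Finset.single_le_sum (f := fun l' => ∑ j'', ∑ k'', (‖u l' * pder2 h u j'' k''‖ +
            ‖u l' * pder2 g u j'' k''‖))
            (fun i _ => Finset.sum_nonneg fun i' _ => Finset.sum_nonneg fun i'' _ => nn i i' i'')
            (mem_univ l)
      _ ≤ M := hbd u hu
  -- Schwarz step: pointwise second-derivative bound
  have key : ∀ w ∈ polydisk n, ∀ j' k' : Fin n,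
      ‖pder2 h w j' k'‖ + ‖pder2 g w j' k'‖ ≤ M := by
    intro w hw j' k'
    obtain ⟨α, hα, hαA⟩ := exists_unit_mul (pder2 h w j' k')
    obtain ⟨β, hβ, hβB⟩ := exists_unit_mul (pder2 g w j' k')
    set e : Fin n → ℂ := Pi.single j' 1 with he
    set u : ℂ → Fin n → ℂ := fun ζ => w + (ζ - w j') • e with hu
    have hui : ∀ ζ (i : Fin n), u ζ i = if i = j' then ζ else w i := by
      intro ζ i
      by_cases hij : i = j'
      · subst hij; simp [hu, he, Pi.single_eq_same]
      · simp [hu, he, hij, Pi.single_eq_of_ne hij]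
    have humem : ∀ ζ : ℂ, ‖ζ‖ < 1 → u ζ ∈ polydisk n := by
      intro ζ hζ i
      rw [hui]
      by_cases hij : i = j' <;> simp [hij, hζ, hw i]
    have hudiff : DifferentiableAt ℂ u (w j') → True := fun _ => trivial
    have hud : ∀ ζ : ℂ, DifferentiableAt ℂ u ζ :=
      fun ζ => (((differentiableAt_id.sub_const _).smul_const e).const_add w)
    set W : ℂ → ℂ := fun ζ => α * pder2 h (u ζ) j' k' + β * pder2 g (u ζ) j' k' with hW
    have hWd : ∀ ζ ∈ ball (0:ℂ) 1, DifferentiableAt ℂ W ζ := by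
      intro ζ hζ
      have hmem : u ζ ∈ polydisk n := humem ζ (by simpa using mem_ball_zero_iff.1 hζ)
      exact ((((S2h j' k') _ hmem).comp ζ (hud ζ)).const_mul α).add
        ((((S2g j' k') _ hmem).comp ζ (hud ζ)).const_mul β)
    have hWb : ∀ ζ ∈ ball (0:ℂ) 1, ‖ζ * W ζ‖ ≤ M := by
      intro ζ hζ
      have hζ1 : ‖ζ‖ < 1 := by simpa using mem_ball_zero_iff.1 hζ
      have hmem : u ζ ∈ polydisk n := humem ζ hζ1
      have huζ : u ζ j' = ζ := by rw [hui]; simp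
      calc ‖ζ * W ζ‖
          = ‖α * (ζ * pder2 h (u ζ) j' k') + β * (ζ * pder2 g (u ζ) j' k')‖ := by
            rw [hW]; ring_nf
        _ ≤ ‖α * (ζ * pder2 h (u ζ) j' k')‖ +
            ‖β * (ζ * pder2 g (u ζ) j' k')‖ := norm_add_le _ _
        _ = ‖ζ * pder2 h (u ζ) j' k'‖ + ‖ζ * pder2 g (u ζ) j' k'‖ := by
            simp [norm_mul, hα, hβ]
        _ ≤ M := by
            have := hterm (u ζ) hmem j' j' k'
            rwa [huζ] at this
    have hζ₀ : w j' ∈ ball (0:ℂ) 1 := by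
      rw [mem_ball_zero_iff]
      exact hw j'
    have hfin := schwarz_step hWd hWb hζ₀
    have hu0 : u (w j') = w := by
      funext i
      rw [hui]
      by_cases hij : i = j' <;> simp [hij]
    simp only [hW, hu0] at hfin
    have habs : ‖α * pder2 h w j' k' + β * pder2 g w j' k'‖
        = ‖pder2 h w j' k'‖ + ‖pder2 g w j' k'‖ := by
      rw [hαA, hβB, ← Complex.ofReal_add, Complex.norm_real, Real.norm_eq_abs]
      exact _root_.abs_of_nonneg (add_nonneg (norm_nonneg _) (norm_nonneg _))
    rw [habs] at hfin
    exact hfin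
  -- mean value step along the segment [0,z]
  obtain ⟨α, hα, hαA⟩ := exists_unit_mul (pder h z k - 1)
  obtain ⟨β, hβ, hβB⟩ := exists_unit_mul (pder g z k)
  have hsz : ∀ t : ℝ, t ∈ Set.Icc (0:ℝ) 1 → t • z ∈ polydisk n := by
    intro t ht i
    have hti : (t • z) i = (t : ℂ) * z i := by
      simp [Pi.smul_apply, Complex.real_smul]
    rw [hti, norm_mul, Complex.norm_real, Real.norm_eq_abs]
    have h1 : |t| ≤ 1 := abs_le.2 ⟨by linarith [ht.1], ht.2⟩
    calc |t| * ‖z i‖ ≤ 1 * ‖z i‖ :=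
          mul_le_mul_of_nonneg_right h1 (norm_nonneg _)
      _ = ‖z i‖ := one_mul _
      _ < 1 := hz i
  set ψ : ℝ → ℂ := fun t => α * pder h (t • z) k + β * pder g (t • z) k with hψ
  set ψ' : ℝ → ℂ := fun t => α * (∑ j, z j * pder2 h (t • z) j k) +
    β * (∑ j, z j * pder2 g (t • z) j k) with hψ'
  have hcurve : ∀ t : ℝ, HasDerivAt (fun t : ℝ => t • z) z t := fun t => by
    simpa using (hasDerivAt_id t).smul_const z
  have hzdec : (∑ j, z j • (Pi.single j 1 : Fin n → ℂ)) = z := by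
    funext i
    rw [Finset.sum_apply]
    simp [Pi.single_apply]
  have hchain : ∀ (f : (Fin n → ℂ) → ℂ),
      (∀ w ∈ polydisk n, DifferentiableAt ℂ (fun w => pder f w k) w) →
      ∀ t ∈ Set.Icc (0:ℝ) 1, HasDerivAt (fun t : ℝ => pder f (t • z) k)
        (∑ j, z j * pder2 f (t • z) j k) t := by
    intro f hfd t ht
    have hmem := hsz t ht
    have hL := (hfd _ hmem).hasFDerivAt
    have hcomp := (hL.restrictScalars ℝ).comp_hasDerivAt t (hcurve t)
    convert hcomp using 1
    any_goals rfl
    set L := fderiv ℂ (fun w => pder f w k) (t • z) with hLdef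
    show ∑ j, z j * pder2 f (t • z) j k = L z
    conv_rhs => rw [← hzdec]
    rw [map_sum]
    refine Finset.sum_congr rfl fun j _ => ?_
    rw [_root_.map_smul, smul_eq_mul]
    congr 1
  have hders : ∀ t ∈ Set.Icc (0:ℝ) 1, HasDerivAt ψ (ψ' t) t := fun t ht =>
    ((hchain h (S1h k) t ht).const_mul α).add ((hchain g (S1g k) t ht).const_mul β)
  have hbound : ∀ t ∈ Set.Icc (0:ℝ) 1, ‖ψ' t‖ ≤ (n : ℝ) * M * ‖z‖ := by
    intro t ht
    have hmem := hsz t ht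
    calc ‖ψ' t‖ ≤ ‖α * (∑ j, z j * pder2 h (t • z) j k)‖ +
          ‖β * (∑ j, z j * pder2 g (t • z) j k)‖ := norm_add_le _ _
      _ = ‖∑ j, z j * pder2 h (t • z) j k‖ + ‖∑ j, z j * pder2 g (t • z) j k‖ := by
          rw [norm_mul, norm_mul, hα, hβ,
            one_mul, one_mul]
      _ ≤ (∑ j, ‖z j * pder2 h (t • z) j k‖) + ∑ j, ‖z j * pder2 g (t • z) j k‖ :=
          add_le_add (norm_sum_le _ _) (norm_sum_le _ _)
      _ = ∑ j, (‖z j‖ * ‖pder2 h (t • z) j k‖ + ‖z j‖ * ‖pder2 g (t • z) j k‖) := by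
          rw [← Finset.sum_add_distrib]
          exact Finset.sum_congr rfl fun j _ => by rw [norm_mul, norm_mul]
      _ ≤ ∑ _j : Fin n, ‖z‖ * M := by
          apply Finset.sum_le_sum
          intro j _
          have h1 : ‖z j‖ ≤ ‖z‖ := norm_le_pi_norm z j
          have h2 : ‖pder2 h (t • z) j k‖ + ‖pder2 g (t • z) j k‖ ≤ M := by
            simpa using key (t • z) hmem j k
          nlinarith [norm_nonneg (pder2 h (t • z) j k), norm_nonneg (pder2 g (t • z) j k),
            norm_nonneg (z j), norm_nonneg z]
      _ = (n : ℝ) * M * ‖z‖ := by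
          rw [Finset.sum_const, Finset.card_univ, Fintype.card_fin, nsmul_eq_mul]
          ring
  have hmvt := Convex.norm_image_sub_le_of_norm_hasDerivWithin_le
    (fun t ht => (hders t ht).hasDerivWithinAt) hbound (convex_Icc 0 1)
    (Set.left_mem_Icc.2 zero_le_one) (Set.right_mem_Icc.2 zero_le_one)
  have hψ1 : ψ 1 = α * pder h z k + β * pder g z k := by simp [hψ]
  have hψ0 : ψ 0 = α := by simp [hψ, hph k, hpg k]
  have hdiffeq : ψ 1 - ψ 0 = α * (pder h z k - 1) + β * pder g z k := by
    rw [hψ1, hψ0]; ring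
  have habs2 : ‖ψ 1 - ψ 0‖ = ‖pder h z k - 1‖ + ‖pder g z k‖ := by
    rw [hdiffeq, hαA, hβB, ← Complex.ofReal_add, Complex.norm_real, Real.norm_eq_abs]
    exact _root_.abs_of_nonneg (add_nonneg (norm_nonneg _) (norm_nonneg _))
  have hkey2 : ‖pder h z k - 1‖ + ‖pder g z k‖ ≤ (n : ℝ) * M * ‖z‖ := by
    rw [← habs2]
    simpa using hmvt
  have e1 : ‖pder h z k‖ ≤ 1 + ‖pder h z k - 1‖ := by
    calc ‖pder h z k‖ = ‖1 + (pder h z k - 1)‖ := by ring_nf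
      _ ≤ ‖(1:ℂ)‖ + ‖pder h z k - 1‖ := norm_add_le _ _
      _ = 1 + ‖pder h z k - 1‖ := by rw [norm_one]
  have e2 : 1 - ‖pder h z k - 1‖ ≤ ‖pder h z k‖ := by
    have h1 : ‖pder h z k + (1 - pder h z k)‖ ≤
        ‖pder h z k‖ + ‖1 - pder h z k‖ := norm_add_le _ _
    have h0 : pder h z k + (1 - pder h z k) = 1 := by ring
    rw [h0, norm_one] at h1
    have h2 : ‖1 - pder h z k‖ = ‖pder h z k - 1‖ :=
      norm_sub_rev _ _
    linarith
  exact ⟨by linarith, by linarith⟩
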